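/- Let p be a strictly positive joint probability mass function of random variables (X_1, …, X_d, Y) on finite types. Fix i ∈ {1,…,d} and a subset S ⊆ {1,…,d} with i ∈ S, and let ε ≥ 0. Suppose that for every U ⊆ S \ {i} and every V ⊆ {1,…,d} \ S, both I_a(X_i; X_V | X_U, Y) ≤ ε and I_a(X_i; X_V | X_U) ≤ ε. Then the expected absolute error between the restricted Shapley estimate and the Shapley value satisfies E_X | φ̂^S_X(i) − φ_X(i) | ≤ 2ε, where the expectation is over X drawn from the marginal distribution of p. -/

import Mathlib

open scoped Classical BigOperators

variable {d : ℕ} {𝒳 : Fin d → Type*} [∀ j, Fintype (𝒳 j)] {𝒴 : Type*} [Fintype 𝒴]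

/-- The joint marginal probability `p(x_S, y)` of `(X_S, Y)` at the restriction of `x` to `S`. -/
noncomputable def margXY (p : (∀ j, 𝒳 j) → 𝒴 → ℝ) (S : Finset (Fin d))
    (x : ∀ j, 𝒳 j) (y : 𝒴) : ℝ :=
  ∑ x' : ∀ j, 𝒳 j, if ∀ j ∈ S, x' j = x j then p x' y else 0

/-- The marginal probability `p(x_S)` of `X_S` at the restriction of `x` to `S`. -/
noncomputable def margX (p : (∀ j, 𝒳 j) → 𝒴 → ℝ) (S : Finset (Fin d))
    (x : ∀ j, 𝒳 j) : ℝ :=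
  ∑ y, margXY p S x y

/-- The marginal probability `p(x)` of the full feature vector `X`. -/
noncomputable def pX (p : (∀ j, 𝒳 j) → 𝒴 → ℝ) (x : ∀ j, 𝒳 j) : ℝ :=
  ∑ y, p x y

/-- The conditional probability `p(y | x_S) = p(y, x_S) / p(x_S)`
(for `S = ∅` this is `p(y)` when `p` sums to one). -/
noncomputable def condY (p : (∀ j, 𝒳 j) → 𝒴 → ℝ) (S : Finset (Fin d))
    (x : ∀ j, 𝒳 j) (y : 𝒴) : ℝ :=
  margXY p S x y / margX p S x

/-- The importance score `v_x(S) = ∑_y p(y | x) log p(y | x_S)`. -/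
noncomputable def impScore (p : (∀ j, 𝒳 j) → 𝒴 → ℝ) (x : ∀ j, 𝒳 j)
    (S : Finset (Fin d)) : ℝ :=
  ∑ y, condY p Finset.univ x y * Real.log (condY p S x y)

/-- The marginal contribution `m_x(S, i) = v_x(S) − v_x(S \ {i})`. -/
noncomputable def margContrib (p : (∀ j, 𝒳 j) → 𝒴 → ℝ) (x : ∀ j, 𝒳 j)
    (S : Finset (Fin d)) (i : Fin d) : ℝ :=
  impScore p x S - impScore p x (S.erase i)

/-- The Shapley value `φ_x(i)`. -/
noncomputable def shapley (p : (∀ j, 𝒳 j) → 𝒴 → ℝ) (x : ∀ j, 𝒳 j) (i : Fin d) : ℝ :=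
  (1 / (d : ℝ)) * ∑ A : Finset (Fin d),
    if i ∈ A then margContrib p x A i / ((d - 1).choose (A.card - 1) : ℝ) else 0

/-- The restricted Shapley estimate `φ̂^S_x(i)` over a feature subset `S` containing `i`. -/
noncomputable def shapleyRes (p : (∀ j, 𝒳 j) → 𝒴 → ℝ) (x : ∀ j, 𝒳 j)
    (S : Finset (Fin d)) (i : Fin d) : ℝ :=
  (1 / (S.card : ℝ)) * ∑ T ∈ S.powerset,
    if i ∈ T then margContrib p x T i / ((S.card - 1).choose (T.card - 1) : ℝ) else 0

/-- The absolute conditional mutual information `I_a(X_A; X_B | X_C)`. -/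
noncomputable def IaX (p : (∀ j, 𝒳 j) → 𝒴 → ℝ) (A B C : Finset (Fin d)) : ℝ :=
  ∑ x : ∀ j, 𝒳 j, pX p x *
    |Real.log ((margX p (A ∪ B ∪ C) x * margX p C x) /
      (margX p (A ∪ C) x * margX p (B ∪ C) x))|

/-- The absolute conditional mutual information `I_a(X_A; X_B | X_C, Y)`. -/
noncomputable def IaXY (p : (∀ j, 𝒳 j) → 𝒴 → ℝ) (A B C : Finset (Fin d)) : ℝ :=
  ∑ x : ∀ j, 𝒳 j, ∑ y, p x y *
    |Real.log ((margXY p (A ∪ B ∪ C) x y * margXY p C x y) /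
      (margXY p (A ∪ C) x y * margXY p (B ∪ C) x y))|

set_option linter.unusedSectionVars false

/-! ### Auxiliary positivity and marginal lemmas -/

section Aux
variable {p : (∀ j, 𝒳 j) → 𝒴 → ℝ}

lemma margXY_pos (hpos : ∀ x y, 0 < p x y) (S : Finset (Fin d)) (x : ∀ j, 𝒳 j) (y : 𝒴) :
    0 < margXY p S x y := by
  unfold margXY
  refine Finset.sum_pos' (fun x' _ => ?_) ⟨x, Finset.mem_univ x, ?_⟩
  · split
    · exact (hpos _ _).le
    · exact le_refl 0
  · rw [if_pos (fun j _ => rfl)]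
    exact hpos x y

lemma margX_pos (hpos : ∀ x y, 0 < p x y) [Nonempty 𝒴] (S : Finset (Fin d)) (x : ∀ j, 𝒳 j) :
    0 < margX p S x :=
  Finset.sum_pos (fun y _ => margXY_pos hpos S x y) Finset.univ_nonempty

lemma pX_pos (hpos : ∀ x y, 0 < p x y) [Nonempty 𝒴] (x : ∀ j, 𝒳 j) :
    0 < pX p x :=
  Finset.sum_pos (fun y _ => hpos x y) Finset.univ_nonempty

lemma condY_pos (hpos : ∀ x y, 0 < p x y) [Nonempty 𝒴] (S : Finset (Fin d))
    (x : ∀ j, 𝒳 j) (y : 𝒴) : 0 < condY p S x y :=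
  div_pos (margXY_pos hpos S x y) (margX_pos hpos S x)

lemma margXY_univ (x : ∀ j, 𝒳 j) (y : 𝒴) : margXY p Finset.univ x y = p x y := by
  rw [margXY, Finset.sum_eq_single x]
  · simp
  · intro b _ hb
    rw [if_neg]
    intro h
    exact hb (funext fun j => h j (Finset.mem_univ j))
  · intro h; exact absurd (Finset.mem_univ x) h

lemma margX_univ (x : ∀ j, 𝒳 j) : margX p Finset.univ x = pX p x := by
  simp [margX, pX, margXY_univ]

lemma condY_univ (x : ∀ j, 𝒳 j) (y : 𝒴) : condY p Finset.univ x y = p x y / pX p x := by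
  rw [condY, margXY_univ, margX_univ]

lemma sum_condY_univ (hpos : ∀ x y, 0 < p x y) [Nonempty 𝒴] (x : ∀ j, 𝒳 j) :
    ∑ y, condY p Finset.univ x y = 1 := by
  simp only [condY_univ]
  rw [← Finset.sum_div]
  exact div_self (ne_of_gt (pX_pos hpos x))

end Aux

/-! ### Combinatorial identity -/

open Finset Nat in
lemma keyNatStep (u r m : ℕ) :
    ∑ v ∈ range (m+2), (m+1).choose v * ((u+v)! * (r+(m+1-v))!)
      = (u+r+m+2) * ∑ v ∈ range (m+1), m.choose v * ((u+v)! * (r+(m-v))!) := by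
  have h1 : ∀ v, m + 1 - (v+1) = m - v := fun v => by omega
  have h2 : ∀ v, u + (v+1) = u + v + 1 := fun v => by omega
  have split1 : ∑ v ∈ range (m+2), (m+1).choose v * ((u+v)! * (r+(m+1-v))!)
      = (∑ v ∈ range (m+1), m.choose v * ((u+v+1)! * (r+(m-v))!))
        + ((∑ v ∈ range (m+1), m.choose (v+1) * ((u+v+1)! * (r+(m-v))!))
        + (u)! * (r+(m+1))!) := by
    rw [Finset.sum_range_succ' (fun v => (m+1).choose v * ((u+v)! * (r+(m+1-v))!)) (m+1)]
    simp only [Nat.choose_succ_succ, add_mul, Finset.sum_add_distrib, h1, h2,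
      Nat.succ_eq_add_one, Nat.choose_zero_right, one_mul, Nat.sub_zero, Nat.add_zero,
      add_zero, Nat.add_comm 1 m]
    omega
  have split2 : (∑ v ∈ range (m+1), m.choose (v+1) * ((u+v+1)! * (r+(m-v))!))
        + (u)! * (r+(m+1))!
      = ∑ v ∈ range (m+1), m.choose v * ((u+v)! * (r+(m+1-v))!) := by
    have key := Finset.sum_range_succ' (fun v => m.choose v * ((u+v)! * (r+(m+1-v))!)) (m+1)
    rw [Finset.sum_range_succ (fun v => m.choose v * ((u+v)! * (r+(m+1-v))!)) (m+1)] at key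
    simp only [Nat.choose_succ_self, zero_mul, add_zero, Nat.choose_zero_right, one_mul,
      Nat.sub_zero, Nat.add_zero, h1, h2] at key
    omega
  rw [split1, split2, ← Finset.sum_add_distrib, Finset.mul_sum]
  refine Finset.sum_congr rfl fun v hv => ?_
  have hvm : v ≤ m := by simpa [Nat.lt_succ_iff] using hv
  have e1 : (u+v+1)! = (u+v+1) * (u+v)! := Nat.factorial_succ _
  have e2 : r + (m+1-v) = (r + (m-v)) + 1 := by omega
  have e3 : (r + (m-v) + 1)! = (r + (m-v) + 1) * (r + (m-v))! := Nat.factorial_succ _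
  have e4 : u + v + 1 + (r + (m - v) + 1) = u + r + m + 2 := by omega
  rw [e1, e2, e3, ← e4]
  ring

open Finset Nat in
lemma keyNat (u r : ℕ) : ∀ m : ℕ,
    (u+r+1)! * ∑ v ∈ range (m+1), m.choose v * ((u+v)! * (r+(m-v))!)
      = (u+r+1+m)! * ((u)! * (r)!) := by
  intro m
  induction m with
  | zero => simp [Nat.factorial]
  | succ m ih =>
    rw [keyNatStep u r m]
    have hfac : (u+r+1+(m+1))! = (u+r+m+2) * (u+r+1+m)! := by
      rw [show u+r+1+(m+1) = (u+r+1+m)+1 from by omega, Nat.factorial_succ (u+r+1+m),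
        show u+r+1+m+1 = u+r+m+2 from by omega]
    rw [hfac, mul_assoc, ← ih]
    ring

open Finset Nat in
lemma coeff_eq (n k : ℕ) (hk : k ≤ n) :
    (1 / ((n:ℝ)+1)) / (n.choose k : ℝ)
      = (((k)! * (n-k)! : ℕ) : ℝ) / (((n+1)! : ℕ) : ℝ) := by
  have h := Nat.choose_mul_factorial_mul_factorial hk
  have hC : (0:ℝ) < (n.choose k : ℝ) := by exact_mod_cast Nat.choose_pos hk
  have hfac : ((n.choose k : ℕ) : ℝ) * (((k)! : ℕ) : ℝ) * (((n-k)! : ℕ) : ℝ)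
      = (((n)! : ℕ) : ℝ) := by exact_mod_cast h
  have hfp1 : (0:ℝ) < (((n+1)! : ℕ) : ℝ) := by exact_mod_cast Nat.factorial_pos (n+1)
  rw [div_div, div_eq_div_iff (by positivity) (by positivity)]
  push_cast [Nat.factorial_succ]
  linear_combination (-(n:ℝ)-1) * hfac

open Finset Nat in
lemma keyReal (u r m : ℕ) :
    ∑ v ∈ range (m+1), (m.choose v : ℝ) *
      ((1 / (((u+r+m : ℕ):ℝ)+1)) / (((u+r+m).choose (u+v) : ℕ) : ℝ))
      = (1 / (((u+r:ℕ):ℝ)+1)) / (((u+r).choose u : ℕ) : ℝ) := by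
  have hL : ∑ v ∈ range (m+1), (m.choose v : ℝ) *
      ((1 / (((u+r+m : ℕ):ℝ)+1)) / (((u+r+m).choose (u+v) : ℕ) : ℝ))
      = ((∑ v ∈ range (m+1), m.choose v * ((u+v)! * (r+(m-v))!) : ℕ) : ℝ)
        / ((((u+r+m+1)! : ℕ)) : ℝ) := by
    rw [Nat.cast_sum, Finset.sum_div]
    refine Finset.sum_congr rfl fun v hv => ?_
    have hvm : v ≤ m := by simpa [Nat.lt_succ_iff] using hv
    have hk : u + v ≤ u+r+m := by omega
    have := coeff_eq (u+r+m) (u+v) hk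
    rw [show u+r+m - (u+v) = r + (m-v) from by omega] at this
    rw [this]
    push_cast
    ring
  have hR : (1 / (((u+r:ℕ):ℝ)+1)) / (((u+r).choose u : ℕ) : ℝ)
      = (((u)! * (r)! : ℕ) : ℝ) / ((((u+r+1)! : ℕ)) : ℝ) := by
    have := coeff_eq (u+r) u (by omega)
    rw [show u+r-u = r from by omega] at this
    exact this
  rw [hL, hR, div_eq_div_iff
    (Nat.cast_ne_zero.mpr (Nat.factorial_ne_zero _))
    (Nat.cast_ne_zero.mpr (Nat.factorial_ne_zero _))]
  have hk := keyNat u r m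
  rw [show u+r+1+m = u+r+m+1 from by omega] at hk
  norm_cast
  rw [mul_comm, hk]
  ring

open Finset Nat in
lemma weight_sum {d : ℕ} (i : Fin d) (S : Finset (Fin d)) (hiS : i ∈ S) (U : Finset (Fin d))
    (hU : U ⊆ S.erase i) :
    ∑ V ∈ (Finset.univ \ S : Finset (Fin d)).powerset,
      (1/(d:ℝ)) / (((d-1).choose (U.card + V.card) : ℕ) : ℝ)
    = (1/(S.card:ℝ)) / (((S.card-1).choose U.card : ℕ) : ℝ) := by
  classical
  have hs1 : 1 ≤ S.card := Finset.card_pos.mpr ⟨i, hiS⟩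
  have hus : U.card ≤ S.card - 1 := by
    have := Finset.card_le_card hU
    rwa [Finset.card_erase_of_mem hiS] at this
  have hsd : S.card ≤ d := by
    have := Finset.card_le_card (Finset.subset_univ S)
    simpa using this
  have hWcard : (Finset.univ \ S : Finset (Fin d)).card = d - S.card := by
    rw [Finset.card_sdiff_of_subset (Finset.subset_univ S)]
    simp
  have key := Finset.sum_powerset_apply_card
    (f := fun n => (1/(d:ℝ)) / (((d-1).choose (U.card + n) : ℕ) : ℝ))
    (x := (Finset.univ \ S : Finset (Fin d)))
  rw [key, hWcard]
  set u := U.card with hu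
  set m0 := d - S.card with hm0
  set r := S.card - 1 - u with hr
  have h1 : d - 1 = u + r + m0 := by omega
  have h2 : S.card - 1 = u + r := by omega
  have h3 : (d : ℝ) = ((u+r+m0 : ℕ) : ℝ) + 1 := by
    have : d = (u+r+m0) + 1 := by omega
    rw [this]; push_cast; ring
  have h4 : (S.card : ℝ) = ((u+r : ℕ) : ℝ) + 1 := by
    have : S.card = (u+r) + 1 := by omega
    rw [this]; push_cast; ring
  rw [h1, h2, h3, h4]
  simp only [nsmul_eq_mul]
  exact keyReal u r m0

open Finset Nat in
lemma weight_total {d : ℕ} (i : Fin d) (S : Finset (Fin d)) (hiS : i ∈ S) :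
    ∑ U ∈ (S.erase i).powerset,
      (1/(S.card:ℝ)) / (((S.card-1).choose U.card : ℕ) : ℝ) = 1 := by
  classical
  have hs1 : 1 ≤ S.card := Finset.card_pos.mpr ⟨i, hiS⟩
  have key := Finset.sum_powerset_apply_card
    (f := fun n => (1/(S.card:ℝ)) / (((S.card-1).choose n : ℕ) : ℝ))
    (x := S.erase i)
  rw [key, Finset.card_erase_of_mem hiS]
  have : ∀ v ∈ range (S.card - 1 + 1),
      (S.card-1).choose v • ((1/(S.card:ℝ)) / (((S.card-1).choose v : ℕ) : ℝ))
        = 1/(S.card:ℝ) := by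
    intro v hv
    have hv' : v ≤ S.card - 1 := by simpa [Nat.lt_succ_iff] using hv
    have hC : (((S.card-1).choose v : ℕ) : ℝ) ≠ 0 :=
      Nat.cast_ne_zero.mpr (Nat.choose_pos hv').ne'
    rw [nsmul_eq_mul]
    field_simp
  rw [Finset.sum_congr rfl this, Finset.sum_const, Finset.card_range]
  have : (S.card - 1 + 1 : ℕ) = S.card := by omega
  rw [this, nsmul_eq_mul, mul_one_div, div_self (Nat.cast_ne_zero.mpr (by omega))]

/-! ### Representations of the Shapley value and its restricted estimate -/

section Rep
variable {p : (∀ j, 𝒳 j) → 𝒴 → ℝ}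

lemma shapleyRes_eq (x : ∀ j, 𝒳 j) (S : Finset (Fin d)) (i : Fin d) (hiS : i ∈ S) :
    shapleyRes p x S i = ∑ U ∈ (S.erase i).powerset,
      (1/(S.card:ℝ)) / (((S.card-1).choose U.card : ℕ) : ℝ) * margContrib p x ({i} ∪ U) i := by
  rw [shapleyRes, Finset.mul_sum]
  simp only [mul_ite, mul_zero]
  rw [← Finset.sum_filter]
  refine Finset.sum_nbij' (fun T => T.erase i) (fun U => insert i U) ?_ ?_ ?_ ?_ ?_
  · intro T hT
    rw [Finset.mem_filter, Finset.mem_powerset] at hT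
    exact Finset.mem_powerset.mpr (Finset.erase_subset_erase i hT.1)
  · intro U hU
    rw [Finset.mem_powerset] at hU
    rw [Finset.mem_filter, Finset.mem_powerset]
    refine ⟨Finset.insert_subset hiS (hU.trans (Finset.erase_subset i S)), Finset.mem_insert_self i U⟩
  · intro T hT
    rw [Finset.mem_filter] at hT
    exact Finset.insert_erase hT.2
  · intro U hU
    rw [Finset.mem_powerset] at hU
    exact Finset.erase_insert (fun hi => (Finset.mem_erase.mp (hU hi)).1 rfl)
  · intro T hT
    rw [Finset.mem_filter] at hT
    rw [show ({i} : Finset (Fin d)) ∪ T.erase i = T from by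
      rw [← Finset.insert_eq]; exact Finset.insert_erase hT.2]
    rw [Finset.card_erase_of_mem hT.2]
    ring

lemma shapley_eq (x : ∀ j, 𝒳 j) (S : Finset (Fin d)) (i : Fin d) (hiS : i ∈ S) :
    shapley p x i = ∑ U ∈ (S.erase i).powerset, ∑ V ∈ (Finset.univ \ S).powerset,
      (1/(d:ℝ)) / (((d-1).choose (U.card + V.card) : ℕ) : ℝ)
        * margContrib p x ({i} ∪ V ∪ U) i := by
  rw [shapley, Finset.mul_sum]
  simp only [mul_ite, mul_zero]
  rw [← Finset.sum_filter, ← Finset.sum_product']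
  refine Finset.sum_nbij' (fun A => (((A ∩ S).erase i : Finset (Fin d)), (A \ S : Finset (Fin d))))
    (fun UV => {i} ∪ UV.2 ∪ UV.1) ?_ ?_ ?_ ?_ ?_
  · intro A hA
    rw [Finset.mem_filter] at hA
    rw [Finset.mem_product]
    constructor
    · exact Finset.mem_powerset.mpr (Finset.erase_subset_erase i Finset.inter_subset_right)
    · exact Finset.mem_powerset.mpr (Finset.sdiff_subset_sdiff (Finset.subset_univ A) le_rfl)
  · intro UV hUV
    rw [Finset.mem_filter]
    refine ⟨Finset.mem_univ _, ?_⟩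
    simp [Finset.mem_union]
  · intro A hA
    rw [Finset.mem_filter] at hA
    have hiA : i ∈ A := hA.2
    ext j
    by_cases hj : j = i
    · subst hj
      simp [hiA]
    · simp only [Finset.mem_union, Finset.mem_singleton, Finset.mem_sdiff, Finset.mem_erase,
        Finset.mem_inter, hj, false_or]
      constructor
      · rintro ((⟨hjA, _⟩) | ⟨_, hjA, _⟩) <;> exact hjA
      · intro hjA
        by_cases hjS : j ∈ S
        · exact Or.inr ⟨hj, hjA, hjS⟩
        · exact Or.inl ⟨hjA, hjS⟩
  · rintro ⟨U, V⟩ hUV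
    rw [Finset.mem_product, Finset.mem_powerset, Finset.mem_powerset] at hUV
    obtain ⟨hU, hV⟩ := hUV
    have hUS : ∀ j ∈ U, j ∈ S := fun j hj => Finset.mem_of_mem_erase (hU hj)
    have hUi : i ∉ U := fun hi => (Finset.mem_erase.mp (hU hi)).1 rfl
    have hVS : ∀ j ∈ V, j ∉ S := fun j hj => (Finset.mem_sdiff.mp (hV hj)).2
    have hVi : i ∉ V := fun hi => hVS i hi hiS
    rw [Prod.mk.injEq]
    constructor
    · ext j
      by_cases hj : j = i
      · subst hj
        simp [hUi]
      · simp only [Finset.mem_erase, Finset.mem_inter, Finset.mem_union, Finset.mem_singleton,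
          hj, false_or, ne_eq, not_false_iff, true_and]
        constructor
        · rintro ⟨hjVU, hjS⟩
          rcases hjVU with hjV | hjU
          · exact absurd hjS (hVS j hjV)
          · exact hjU
        · intro hjU
          exact ⟨Or.inr hjU, hUS j hjU⟩
    · ext j
      by_cases hj : j = i
      · subst hj
        simp [hiS, hVi]
      · simp only [Finset.mem_sdiff, Finset.mem_union, Finset.mem_singleton, hj, false_or]
        constructor
        · rintro ⟨hjV | hjU, hjS⟩
          · exact hjV
          · exact absurd (hUS j hjU) hjS
        · intro hjV
          exact ⟨Or.inl hjV, hVS j hjV⟩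
  · intro A hA
    rw [Finset.mem_filter] at hA
    have hiA : i ∈ A := hA.2
    have hset : ({i} : Finset (Fin d)) ∪ (A \ S) ∪ (A ∩ S).erase i = A := by
      ext j
      by_cases hj : j = i
      · subst hj
        simp [hiA]
      · simp only [Finset.mem_union, Finset.mem_singleton, Finset.mem_sdiff, Finset.mem_erase,
          Finset.mem_inter, hj, false_or]
        constructor
        · rintro (⟨hjA, _⟩ | ⟨_, hjA, _⟩) <;> exact hjA
        · intro hjA
          by_cases hjS : j ∈ S
          · exact Or.inr ⟨hj, hjA, hjS⟩
          · exact Or.inl ⟨hjA, hjS⟩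
    have hcard : ((A ∩ S).erase i).card + (A \ S).card = A.card - 1 := by
      have h1 : (A ∩ S).card + (A \ S).card = A.card := Finset.card_inter_add_card_sdiff A S
      have h2 : ((A ∩ S).erase i).card = (A ∩ S).card - 1 :=
        Finset.card_erase_of_mem (Finset.mem_inter.mpr ⟨hiA, hiS⟩)
      have h3 : 1 ≤ (A ∩ S).card :=
        Finset.card_pos.mpr ⟨i, Finset.mem_inter.mpr ⟨hiA, hiS⟩⟩
      omega
    rw [hset, hcard]
    ring

end Rep

/-! ### The analytic bound for a single pair (U, V) -/

section Analytic
variable {p : (∀ j, 𝒳 j) → 𝒴 → ℝ}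

lemma log4 {a b c e : ℝ} (ha : 0 < a) (hb : 0 < b) (hc : 0 < c) (he : 0 < e) :
    Real.log ((a*b)/(c*e)) = Real.log a + Real.log b - Real.log c - Real.log e := by
  rw [Real.log_div (by positivity) (by positivity), Real.log_mul ha.ne' hb.ne',
    Real.log_mul hc.ne' he.ne']
  ring

lemma contrib_diff_eq (hpos : ∀ x y, 0 < p x y) [Nonempty 𝒴]
    (i : Fin d) (U V : Finset (Fin d)) (hiU : i ∉ U) (hiV : i ∉ V) (x : ∀ j, 𝒳 j) :
    margContrib p x ({i} ∪ U) i - margContrib p x ({i} ∪ V ∪ U) i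
      = ∑ y, condY p Finset.univ x y *
        (Real.log ((margX p ({i} ∪ V ∪ U) x * margX p U x) /
            (margX p ({i} ∪ U) x * margX p (V ∪ U) x))
          - Real.log ((margXY p ({i} ∪ V ∪ U) x y * margXY p U x y) /
            (margXY p ({i} ∪ U) x y * margXY p (V ∪ U) x y))) := by
  have e1 : ({i} ∪ U).erase i = U := by
    rw [← Finset.insert_eq, Finset.erase_insert hiU]
  have e2 : ({i} ∪ V ∪ U).erase i = V ∪ U := by
    rw [Finset.union_assoc, ← Finset.insert_eq,
      Finset.erase_insert (by simp [Finset.mem_union, hiV, hiU])]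
  rw [margContrib, margContrib, e1, e2, impScore, impScore, impScore, impScore,
    ← Finset.sum_sub_distrib, ← Finset.sum_sub_distrib, ← Finset.sum_sub_distrib]
  refine Finset.sum_congr rfl fun y _ => ?_
  have pXY : ∀ (T : Finset (Fin d)), (0:ℝ) < margXY p T x y := fun T => margXY_pos hpos T x y
  have pXX : ∀ (T : Finset (Fin d)), (0:ℝ) < margX p T x := fun T => margX_pos hpos T x
  simp only [condY]
  rw [log4 (pXY _) (pXY _) (pXY _) (pXY _), log4 (pXX _) (pXX _) (pXX _) (pXX _),
    Real.log_div (pXY ({i} ∪ U)).ne' (pXX ({i} ∪ U)).ne',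
    Real.log_div (pXY U).ne' (pXX U).ne',
    Real.log_div (pXY ({i} ∪ V ∪ U)).ne' (pXX ({i} ∪ V ∪ U)).ne',
    Real.log_div (pXY (V ∪ U)).ne' (pXX (V ∪ U)).ne']
  ring

lemma contrib_diff_bound (hpos : ∀ x y, 0 < p x y) [Nonempty 𝒴]
    (i : Fin d) (U V : Finset (Fin d)) (hiU : i ∉ U) (hiV : i ∉ V) :
    ∑ x : ∀ j, 𝒳 j, pX p x *
      |margContrib p x ({i} ∪ U) i - margContrib p x ({i} ∪ V ∪ U) i|
      ≤ IaXY p {i} V U + IaX p {i} V U := by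
  rw [IaXY, IaX, ← Finset.sum_add_distrib]
  refine Finset.sum_le_sum fun x _ => ?_
  rw [contrib_diff_eq hpos i U V hiU hiV x]
  have hpX := pX_pos hpos x
  have hqp : ∀ y, pX p x * condY p Finset.univ x y = p x y := fun y => by
    rw [condY_univ]
    field_simp
  calc pX p x * |∑ y, condY p Finset.univ x y *
        (Real.log ((margX p ({i} ∪ V ∪ U) x * margX p U x) /
            (margX p ({i} ∪ U) x * margX p (V ∪ U) x))
          - Real.log ((margXY p ({i} ∪ V ∪ U) x y * margXY p U x y) /
            (margXY p ({i} ∪ U) x y * margXY p (V ∪ U) x y)))|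
      ≤ pX p x * ∑ y, condY p Finset.univ x y *
        (|Real.log ((margXY p ({i} ∪ V ∪ U) x y * margXY p U x y) /
            (margXY p ({i} ∪ U) x y * margXY p (V ∪ U) x y))|
          + |Real.log ((margX p ({i} ∪ V ∪ U) x * margX p U x) /
            (margX p ({i} ∪ U) x * margX p (V ∪ U) x))|) := by
        refine mul_le_mul_of_nonneg_left ?_ hpX.le
        refine (Finset.abs_sum_le_sum_abs _ _).trans (Finset.sum_le_sum fun y _ => ?_)
        rw [abs_mul, abs_of_nonneg (condY_pos hpos Finset.univ x y).le]
        refine mul_le_mul_of_nonneg_left ?_ (condY_pos hpos Finset.univ x y).le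
        exact (abs_sub _ _).trans (le_of_eq (add_comm _ _))
    _ = (∑ y, p x y *
          |Real.log ((margXY p ({i} ∪ V ∪ U) x y * margXY p U x y) /
            (margXY p ({i} ∪ U) x y * margXY p (V ∪ U) x y))|)
        + pX p x * |Real.log ((margX p ({i} ∪ V ∪ U) x * margX p U x) /
            (margX p ({i} ∪ U) x * margX p (V ∪ U) x))| := by
        rw [Finset.mul_sum]
        have hterm : ∀ y, pX p x * (condY p Finset.univ x y *
            (|Real.log ((margXY p ({i} ∪ V ∪ U) x y * margXY p U x y) /
              (margXY p ({i} ∪ U) x y * margXY p (V ∪ U) x y))|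
            + |Real.log ((margX p ({i} ∪ V ∪ U) x * margX p U x) /
              (margX p ({i} ∪ U) x * margX p (V ∪ U) x))|))
          = p x y * |Real.log ((margXY p ({i} ∪ V ∪ U) x y * margXY p U x y) /
              (margXY p ({i} ∪ U) x y * margXY p (V ∪ U) x y))|
            + p x y * |Real.log ((margX p ({i} ∪ V ∪ U) x * margX p U x) /
              (margX p ({i} ∪ U) x * margX p (V ∪ U) x))| := fun y => by
          rw [← mul_assoc, hqp y]
          ring
        rw [Finset.sum_congr rfl fun y _ => hterm y, Finset.sum_add_distrib, ← Finset.sum_mul]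
        rw [show (∑ y, p x y) = pX p x from rfl]

end Analytic

/-- Case 1 of the proof of Theorem 1: if, for every `U ⊆ S \ {i}` and
`V ⊆ [d] \ S`, both `I_a(X_i; X_V | X_U, Y) ≤ ε` and `I_a(X_i; X_V | X_U) ≤ ε`, then
`E_X |φ̂^S_X(i) − φ_X(i)| ≤ 2ε`. -/
theorem restricted_shapley_error_le_two_eps (p : (∀ j, 𝒳 j) → 𝒴 → ℝ)
    (hpos : ∀ x y, 0 < p x y)
    (hsum : ∑ x : ∀ j, 𝒳 j, ∑ y, p x y = 1)
    (i : Fin d) (S : Finset (Fin d)) (hiS : i ∈ S)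
    (ε : ℝ) (hε : 0 ≤ ε)
    (hIa : ∀ U ⊆ S.erase i, ∀ V ⊆ Finset.univ \ S,
      IaXY p {i} V U ≤ ε ∧ IaX p {i} V U ≤ ε) :
    ∑ x : ∀ j, 𝒳 j, pX p x * |shapleyRes p x S i - shapley p x i| ≤ 2 * ε := by
  have hNE : Nonempty 𝒴 := by
    rcases isEmpty_or_nonempty 𝒴 with h | h
    · simp [Finset.univ_eq_empty] at hsum
    · exact h
  have hWnn : ∀ (U V : Finset (Fin d)),
      0 ≤ (1/(d:ℝ)) / (((d-1).choose (U.card + V.card) : ℕ) : ℝ) := fun U V => by positivity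
  have hdecomp : ∀ x : ∀ j, 𝒳 j, shapleyRes p x S i - shapley p x i
      = ∑ U ∈ (S.erase i).powerset, ∑ V ∈ (Finset.univ \ S).powerset,
          (1/(d:ℝ)) / (((d-1).choose (U.card + V.card) : ℕ) : ℝ)
            * (margContrib p x ({i} ∪ U) i - margContrib p x ({i} ∪ V ∪ U) i) := by
    intro x
    rw [shapleyRes_eq x S i hiS, shapley_eq x S i hiS, ← Finset.sum_sub_distrib]
    refine Finset.sum_congr rfl fun U hU => ?_
    rw [← weight_sum i S hiS U (Finset.mem_powerset.mp hU), Finset.sum_mul,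
      ← Finset.sum_sub_distrib]
    refine Finset.sum_congr rfl fun V hV => ?_
    ring
  have step1 : ∀ x : ∀ j, 𝒳 j, pX p x * |shapleyRes p x S i - shapley p x i|
      ≤ ∑ U ∈ (S.erase i).powerset, ∑ V ∈ (Finset.univ \ S).powerset,
          (1/(d:ℝ)) / (((d-1).choose (U.card + V.card) : ℕ) : ℝ)
            * (pX p x * |margContrib p x ({i} ∪ U) i - margContrib p x ({i} ∪ V ∪ U) i|) := by
    intro x
    rw [hdecomp x]
    refine le_trans (mul_le_mul_of_nonneg_left (Finset.abs_sum_le_sum_abs _ _)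
      (pX_pos hpos x).le) ?_
    rw [Finset.mul_sum]
    refine Finset.sum_le_sum fun U hU => ?_
    refine le_trans (mul_le_mul_of_nonneg_left (Finset.abs_sum_le_sum_abs _ _)
      (pX_pos hpos x).le) ?_
    rw [Finset.mul_sum]
    refine Finset.sum_le_sum fun V hV => ?_
    rw [abs_mul, abs_of_nonneg (hWnn U V)]
    exact le_of_eq (by ring)
  have step2 : ∑ x : ∀ j, 𝒳 j, pX p x * |shapleyRes p x S i - shapley p x i|
      ≤ ∑ U ∈ (S.erase i).powerset, ∑ V ∈ (Finset.univ \ S).powerset,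
          (1/(d:ℝ)) / (((d-1).choose (U.card + V.card) : ℕ) : ℝ)
            * (∑ x : ∀ j, 𝒳 j, pX p x *
                |margContrib p x ({i} ∪ U) i - margContrib p x ({i} ∪ V ∪ U) i|) := by
    refine le_trans (Finset.sum_le_sum fun x _ => step1 x) ?_
    rw [Finset.sum_comm]
    refine le_of_eq (Finset.sum_congr rfl fun U _ => ?_)
    rw [Finset.sum_comm]
    exact Finset.sum_congr rfl fun V _ => by rw [← Finset.mul_sum]
  refine step2.trans ?_
  have hb : ∀ U ∈ (S.erase i).powerset, ∀ V ∈ (Finset.univ \ S).powerset,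
      (∑ x : ∀ j, 𝒳 j, pX p x *
        |margContrib p x ({i} ∪ U) i - margContrib p x ({i} ∪ V ∪ U) i|) ≤ 2 * ε := by
    intro U hU V hV
    have hU' := Finset.mem_powerset.mp hU
    have hV' := Finset.mem_powerset.mp hV
    have hiU : i ∉ U := fun h => (Finset.mem_erase.mp (hU' h)).1 rfl
    have hiV : i ∉ V := fun h => (Finset.mem_sdiff.mp (hV' h)).2 hiS
    have hbd := contrib_diff_bound hpos i U V hiU hiV
    obtain ⟨h1, h2⟩ := hIa U hU' V hV'
    linarith
  calc ∑ U ∈ (S.erase i).powerset, ∑ V ∈ (Finset.univ \ S).powerset,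
          (1/(d:ℝ)) / (((d-1).choose (U.card + V.card) : ℕ) : ℝ)
            * (∑ x : ∀ j, 𝒳 j, pX p x *
                |margContrib p x ({i} ∪ U) i - margContrib p x ({i} ∪ V ∪ U) i|)
      ≤ ∑ U ∈ (S.erase i).powerset, ∑ V ∈ (Finset.univ \ S).powerset,
          (1/(d:ℝ)) / (((d-1).choose (U.card + V.card) : ℕ) : ℝ) * (2 * ε) := by
        refine Finset.sum_le_sum fun U hU => Finset.sum_le_sum fun V hV => ?_
        exact mul_le_mul_of_nonneg_left (hb U hU V hV) (hWnn U V)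
    _ = (∑ U ∈ (S.erase i).powerset, ∑ V ∈ (Finset.univ \ S).powerset,
          (1/(d:ℝ)) / (((d-1).choose (U.card + V.card) : ℕ) : ℝ)) * (2 * ε) := by
        rw [Finset.sum_mul]
        exact Finset.sum_congr rfl fun U _ => by rw [Finset.sum_mul]
    _ = 1 * (2 * ε) := by
        rw [Finset.sum_congr rfl fun U hU => weight_sum i S hiS U (Finset.mem_powerset.mp hU),
          weight_total i S hiS]
    _ = 2 * ε := one_mul _
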